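/- Let (D,X) be a Dyer system and let N : D → M(D,X) = ⊕_{ρ ∈ R} H_ρ be defined by N(g) = Σ_{i=1}^p a_i [ρ_i] for any syllabic expression (x_1^{a_1},…,x_p^{a_p}) of g, where ρ_i = x_1^{a_1}⋯x_{i-1}^{a_{i-1}} x_i x_{i-1}^{-a_{i-1}}⋯x_1^{-a_1}. Then N is a well-defined cocycle: N(gh) = N(g) + g·N(h) for all g, h ∈ D, and writing N(g) = Σ_ρ a_ρ(g)[ρ], the syllabic length of g equals the number of ρ ∈ R with a_ρ(g) ≠ 0. -/

import Mathlib

namespace Paper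

/-- The alternating list `(a, b, a, b, ...)` of length `m`. -/
def altList {α : Type*} (a b : α) : ℕ → List α
  | 0 => []
  | n + 1 => a :: altList b a n

/-- The alternating product `a b a ⋯` of length `m` in a monoid. -/
def altProd {G : Type*} [Monoid G] (a b : G) (m : ℕ) : G := (altList a b m).prod

variable {G : Type*} [Group G]

/-- The set of syllables of a generating set `X`: nontrivial powers of elements of `X`. -/
def Syll (X : Set G) : Set G := {s | ∃ x ∈ X, ∃ a : ℤ, s = x ^ a ∧ s ≠ 1}

/-- A syllabic word: a list all of whose entries are syllables. -/
def SylWord (X : Set G) (w : List G) : Prop := ∀ s ∈ w, s ∈ Syll X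

/-- The syllabic length of an element: minimal length of a syllabic word representing it. -/
noncomputable def sylLen (X : Set G) (g : G) : ℕ :=
  sInf {n | ∃ w : List G, SylWord X w ∧ w.prod = g ∧ w.length = n}

/-- A syllabic word is reduced if its length is the syllabic length of the element
it represents. -/
def Reduced (X : Set G) (w : List G) : Prop :=
  SylWord X w ∧ w.length = sylLen X w.prod

/-- Elementary M-operation of type I. -/
def MOpI (X : Set G) (w w' : List G) : Prop :=
  ∃ (w₁ w₂ : List G) (s t : G), s ∈ Syll X ∧ t ∈ Syll X ∧
    w = w₁ ++ [s, t] ++ w₂ ∧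
    ((s * t ∈ Syll X ∧ w' = w₁ ++ [s * t] ++ w₂) ∨ (s * t = 1 ∧ w' = w₁ ++ w₂))

/-- Elementary M-operation of type II. -/
def MOpII (X : Set G) (w w' : List G) : Prop :=
  ∃ (w₁ w₂ : List G) (s t : G) (m : ℕ), s ∈ Syll X ∧ t ∈ Syll X ∧ 2 ≤ m ∧
    altProd s t m = altProd t s m ∧ sylLen X (altProd s t m) = m ∧
    w = w₁ ++ altList s t m ++ w₂ ∧ w' = w₁ ++ altList t s m ++ w₂

/-- Elementary M-operation (of type I or type II). -/
def MOp (X : Set G) (w w' : List G) : Prop := MOpI X w w' ∨ MOpII X w w'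

/-- A syllabic word is M-reduced if its length cannot be shortened by any finite
sequence of elementary M-operations. -/
def MReduced (X : Set G) (w : List G) : Prop :=
  ∀ w', Relation.ReflTransGen (MOp X) w w' → ¬ w'.length < w.length

/-- Property D: a syllabic word is reduced iff it is M-reduced, and any two reduced
syllabic words representing the same element are connected by a finite sequence of
elementary M-operations of type II. -/
def PropertyD (X : Set G) : Prop :=
  (∀ w : List G, SylWord X w → (Reduced X w ↔ MReduced X w)) ∧
  (∀ w w' : List G, Reduced X w → Reduced X w' → w.prod = w'.prod →
    Relation.ReflTransGen (MOpII X) w w')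

/-- `(G, X)` is a marked group: `X` generates `G`. -/
def Marked (X : Set G) : Prop := Subgroup.closure X = ⊤

/-- `(G, X)` is a strongly marked group. -/
def StronglyMarked (X : Set G) : Prop :=
  Marked X ∧ (1 : G) ∉ X ∧
    ∀ x ∈ X, ∀ y ∈ X, ∀ a b : ℤ, x ^ a ≠ 1 → y ^ b ≠ 1 →
      (x ^ a * y ^ b ∈ Syll X ∨ x ^ a * y ^ b = 1) → x = y

/-- The data of a Dyer graph: a simplicial graph with edge labels `m ≥ 2` and vertex
labels `f ∈ ℕ_{≥2} ∪ {∞}` such that any edge with `m(e) ≠ 2` has both endpoints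
labelled `2`. -/
structure DyerData (V : Type*) where
  adj : V → V → Prop
  symm : ∀ u v, adj u v → adj v u
  loopless : ∀ v, ¬ adj v v
  m : V → V → ℕ
  m_symm : ∀ u v, m u v = m v u
  m_two_le : ∀ u v, adj u v → 2 ≤ m u v
  f : V → ℕ∞
  f_two_le : ∀ v, 2 ≤ f v
  dyer : ∀ u v, adj u v → m u v ≠ 2 → f u = 2 ∧ f v = 2

/-- The defining relators of the Dyer group of `Δ`. -/
def DyerData.rels {V : Type*} (Δ : DyerData V) : Set (FreeGroup V) :=
  {r | ∃ v, Δ.f v ≠ ⊤ ∧ r = (FreeGroup.of v) ^ (Δ.f v).toNat} ∪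
  {r | ∃ u v, Δ.adj u v ∧
    r = altProd (FreeGroup.of u) (FreeGroup.of v) (Δ.m u v) *
        (altProd (FreeGroup.of v) (FreeGroup.of u) (Δ.m u v))⁻¹}

/-- The Dyer group of the data `Δ`. -/
abbrev DyerGroup {V : Type*} (Δ : DyerData V) := PresentedGroup Δ.rels

/-- The standard generating set of a Dyer group. -/
def DyerGens {V : Type*} (Δ : DyerData V) : Set (DyerGroup Δ) :=
  Set.range (PresentedGroup.of (rels := Δ.rels))


open Classical

lemma conj_eq_iff (u t ρ : G) : u⁻¹ * ρ * u = t ↔ ρ = u * t * u⁻¹ := by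
  constructor
  · intro h; rw [← h]; group
  · intro h; rw [h]; group

lemma conj_zpow_inner (a b : G) (k : ℤ) : a * (a⁻¹ * b * a) ^ k * a⁻¹ = b ^ k := by
  rw [show a⁻¹ * b * a = a⁻¹ * b * (a⁻¹)⁻¹ by rw [inv_inv], conj_zpow]
  group

lemma conj_zpow_inv (a b : G) (k : ℤ) : a⁻¹ * ((a * b * a⁻¹) ^ k)⁻¹ * a = b ^ (-k) := by
  rw [conj_zpow]
  group

lemma conj_eq_iff' (u t ρ : G) : u * t * u⁻¹ = ρ ↔ t = u⁻¹ * ρ * u := by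
  constructor
  · intro h; rw [← h]; group
  · intro h; rw [h]; group




lemma altProd_zero {M : Type*} [Monoid M] (a b : M) : altProd a b 0 = 1 := rfl

lemma altProd_succ {M : Type*} [Monoid M] (a b : M) (n : ℕ) :
    altProd a b (n+1) = a * altProd b a n := by
  simp [altProd, altList]

lemma map_altProd {M N : Type*} [Monoid M] [Monoid N] (f : M →* N) (a b : M) :
    ∀ n, f (altProd a b n) = altProd (f a) (f b) n := by
  intro n
  induction n generalizing a b with
  | zero => simp [altProd_zero]
  | succ n ih => rw [altProd_succ, map_mul, ih, altProd_succ]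

/-- shift identity -/
lemma shift_pow (x y : G) (n : ℕ) : x * (y * x) ^ n = (x * y) ^ n * x := by
  have h : SemiconjBy x (y * x) (x * y) := by
    unfold SemiconjBy; rw [mul_assoc]
  exact (h.pow_right n).eq

lemma altProd_two_mul (x y : G) (n : ℕ) : altProd x y (2*n) = (x*y)^n ∧
    altProd x y (2*n+1) = (x*y)^n * x := by
  induction n generalizing x y with
  | zero => constructor <;> simp [altProd_zero, altProd_succ]
  | succ n ih =>
      have heven : ∀ x y : G, altProd x y (2*(n+1)) = (x*y)^(n+1) := by
        intro x y
        rw [show 2*(n+1) = (2*n+1)+1 by ring, altProd_succ, (ih y x).2, ← mul_assoc,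
          shift_pow, pow_succ]
        group
      refine ⟨heven x y, ?_⟩
      rw [show 2*(n+1)+1 = (2*(n+1))+1 from rfl, altProd_succ, heven y x, shift_pow]

section Inv
variable {x y : G}

lemma inv_self (hx : x * x = 1) : x⁻¹ = x := by
  rw [← mul_one x⁻¹, ← hx]; group

lemma mul_inv_invol (hx : x * x = 1) (hy : y * y = 1) : (x * y)⁻¹ = y * x := by
  rw [mul_inv_rev, inv_self hx, inv_self hy]

lemma pow_swap (hx : x * x = 1) (hy : y * y = 1) (n : ℕ) : (y*x)^n = ((x*y)^n)⁻¹ := by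
  rw [← mul_inv_invol hx hy, inv_pow]

lemma braid_pow_eq_one (hx : x * x = 1) (hy : y * y = 1) {m : ℕ}
    (hb : altProd x y m = altProd y x m) : (x * y) ^ m = 1 := by
  rcases Nat.even_or_odd m with ⟨k, hk⟩ | ⟨k, hk⟩
  · subst hk
    rw [show k + k = 2 * k by ring] at hb ⊢
    rw [(altProd_two_mul x y k).1, (altProd_two_mul y x k).1, pow_swap hx hy] at hb
    rw [show 2*k = k*2 by ring, pow_mul, sq]
    nth_rewrite 2 [hb]
    simp
  · subst hk
    rw [(altProd_two_mul x y k).2, (altProd_two_mul y x k).2, pow_swap hx hy] at hb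
    -- hb : (x*y)^k * x = ((x*y)^k)⁻¹ * y
    have h1 : (x*y)^(2*k) * x = y := by
      rw [show 2*k = k + k by ring, pow_add, mul_assoc, hb]; group
    have h2 : (x*y)^(2*k+1) = y * y := by
      rw [pow_succ, ← mul_assoc, h1]
    rw [h2, hy]

end Inv





/-- the sequence of reflections of an alternating word -/
def rho (x y : G) : ℕ → G
  | 0 => x
  | j+1 => x * rho y x j * x⁻¹



lemma rho_invol (x y : G) (hx : x * x = 1) (hy : y * y = 1) (j : ℕ) :
    rho x y j = (x*y)^j * x := by
  induction j generalizing x y with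
  | zero => simp [rho]
  | succ j ih =>
      show x * rho y x j * x⁻¹ = _
      rw [ih y x hy hx, inv_self hx, ← mul_assoc, shift_pow, pow_succ]
      group

section Generic

variable {R : Set G}

open Classical

/-- conjugation equivalence on R -/
def conjEquiv (hR : ∀ (g ρ : G), ρ ∈ R → g * ρ * g⁻¹ ∈ R) (g : G) : ↥R ≃ ↥R where
  toFun ρ := ⟨g⁻¹ * ρ * g, by simpa using hR g⁻¹ ρ ρ.2⟩
  invFun ρ := ⟨g * ρ * g⁻¹, hR g ρ ρ.2⟩
  left_inv ρ := Subtype.ext (by simp; group)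
  right_inv ρ := Subtype.ext (by simp; group)

variable (hR : ∀ (g ρ : G), ρ ∈ R → g * ρ * g⁻¹ ∈ R)

@[simp] lemma conjEquiv_coe (g : G) (ρ : ↥R) :
    ((conjEquiv hR g ρ : ↥R) : G) = g⁻¹ * ρ * g := rfl

/-- the action of G on R → G -/
def act : G →* MulAut (↥R → G) where
  toFun g :=
  { toFun := fun f ρ => g * f (conjEquiv hR g ρ) * g⁻¹
    invFun := fun f ρ => g⁻¹ * f (conjEquiv hR g⁻¹ ρ) * g
    left_inv := by
      intro f; funext ρ
      dsimp only
      have h : conjEquiv hR g (conjEquiv hR g⁻¹ ρ) = ρ := Subtype.ext (by simp; group)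
      rw [h]; group
    right_inv := by
      intro f; funext ρ
      dsimp only
      have h : conjEquiv hR g⁻¹ (conjEquiv hR g ρ) = ρ := Subtype.ext (by simp; group)
      rw [h]; group
    map_mul' := by
      intro f₁ f₂; funext ρ; simp only [Pi.mul_apply]; group }
  map_one' := by
    ext f ρ
    have h : conjEquiv hR (1:G) ρ = ρ := Subtype.ext (by simp)
    simp [h]
  map_mul' := by
    intro g h
    ext f ρ
    have hc : conjEquiv hR (g*h) ρ = conjEquiv hR h (conjEquiv hR g ρ) := Subtype.ext (by simp; group)
    simp [hc]; group

@[simp] lemma act_apply (g : G) (f : ↥R → G) (ρ : ↥R) :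
    (act hR g) f ρ = g * f (conjEquiv hR g ρ) * g⁻¹ := rfl

/-- the semidirect product -/
abbrev K (hR : ∀ (g ρ : G), ρ ∈ R → g * ρ * g⁻¹ ∈ R) := (↥R → G) ⋊[act hR] G

/-- generator images -/
noncomputable def mkK (x : G) : K hR := ⟨fun ρ => if (ρ : G) = x then x else 1, x⟩

/-- powers of generator images -/
noncomputable def pel (x : G) (a : ℤ) : K hR :=
  ⟨fun ρ => if (ρ : G) = x then x ^ a else 1, x ^ a⟩

lemma conj_zpow_self (x : G) (a : ℤ) : x ^ a * x * (x ^ a)⁻¹ = x := by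
  rw [← (Commute.self_zpow x a).eq]; group

lemma conj_zpow_eq (x : G) (a : ℤ) (ρ : G) : ((x^a)⁻¹ * ρ * x^a = x) ↔ (ρ = x) := by
  rw [conj_eq_iff, conj_zpow_self]

lemma pel_zero (x : G) : pel hR x 0 = 1 := by
  apply SemidirectProduct.ext
  · funext ρ; simp [pel]
  · simp [pel]

lemma pel_add (x : G) (a b : ℤ) : pel hR x a * pel hR x b = pel hR x (a+b) := by
  apply SemidirectProduct.ext
  · funext ρ
    show (pel hR x a).left ρ * (act hR (x^a)) (pel hR x b).left ρ = _
    simp only [pel, act_apply, conjEquiv_coe]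
    by_cases h : (ρ : G) = x
    · simp only [h, if_pos, conj_zpow_eq, if_pos rfl]
      rw [zpow_add]; group
    · simp only [h, if_neg, conj_zpow_eq, if_neg h]
      simp
  · show x^a * x^b = x^(a+b)
    rw [zpow_add]

lemma pel_one (x : G) : pel hR x 1 = mkK hR x := by
  apply SemidirectProduct.ext
  · funext ρ; simp [pel, mkK]
  · simp [pel, mkK]

lemma mkK_zpow (x : G) (a : ℤ) : (mkK hR x) ^ a = pel hR x a := by
  induction a using Int.induction_on with
  | zero => rw [zpow_zero, pel_zero]
  | succ n ih => rw [zpow_add_one, ih, ← pel_one hR x, pel_add]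
  | pred n ih =>
      rw [zpow_sub_one, ih, ← pel_one hR x]
      have h := pel_add hR x (-↑n - 1) 1
      simp only [sub_add_cancel] at h
      rw [← h]; group

lemma mkK_right (x : G) : (mkK hR x).right = x := rfl

lemma mkK_left (x : G) (ρ : ↥R) : (mkK hR x).left ρ = if (ρ:G) = x then x else 1 := rfl

lemma altK_right (x y : G) (m : ℕ) :
    (altProd (mkK hR x) (mkK hR y) m).right = altProd x y m := by
  have h := map_altProd (SemidirectProduct.rightHom : K hR →* G) (mkK hR x) (mkK hR y) m
  simpa [SemidirectProduct.rightHom_eq_right, mkK_right] using h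

lemma altK_left (x y : G) (m : ℕ) (ρ : ↥R) :
    (altProd (mkK hR x) (mkK hR y) m).left ρ =
      ((List.range m).map (fun j => if (ρ:G) = rho x y j then (ρ:G) else 1)).prod := by
  induction m generalizing x y ρ with
  | zero => simp [altProd_zero, SemidirectProduct.one_left]
  | succ m ih =>
      rw [altProd_succ, SemidirectProduct.mul_left, List.range_succ_eq_map]
      rw [List.map_cons, List.prod_cons, List.map_map]
      simp only [Pi.mul_apply]
      congr 1
      · rw [mkK_left]
        rcases eq_or_ne ((ρ:G)) x with h | h
        · rw [if_pos h, if_pos (show (ρ:G) = rho x y 0 from h), h]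
        · rw [if_neg h, if_neg (show ¬ (ρ:G) = rho x y 0 from h)]
      · rw [mkK_right, act_apply, ih y x]
        have hconj : ∀ l : List G, x * l.prod * x⁻¹ = (l.map (fun z => x*z*x⁻¹)).prod := by
          intro l
          have := map_list_prod (MulAut.conj x).toMonoidHom l
          exact this
        rw [hconj, List.map_map]
        apply congrArg List.prod
        apply List.map_congr_left
        intro j _
        simp only [Function.comp_apply]
        rw [conjEquiv_coe]
        rcases eq_or_ne (x⁻¹ * (ρ:G) * x) (rho y x j) with h | h
        · rw [if_pos h]
          have h2 : (ρ:G) = rho x y (j+1) := by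
            show (ρ:G) = x * rho y x j * x⁻¹
            rw [← h]; group
          rw [if_pos h2]
          group
        · rw [if_neg h]
          have h2 : ¬ (ρ:G) = rho x y (j+1) := by
            intro hc
            apply h
            have : (ρ:G) = x * rho y x j * x⁻¹ := hc
            rw [this]; group
          rw [if_neg h2]
          simp

lemma prod_ite_pow (ρ : G) (c : ℕ → Prop) (m : ℕ) :
    ((List.range m).map (fun j => if c j then ρ else 1)).prod
      = ρ ^ (∑ j ∈ Finset.range m, if c j then 1 else 0) := by
  induction m with
  | zero => simp
  | succ m ih =>
      rw [List.range_succ, List.map_append, List.prod_append, Finset.sum_range_succ, pow_add, ih]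
      congr 1
      rcases Classical.em (c m) with h | h <;> simp [h]

lemma altK_braid_invol (x y : G) (hx : x*x = 1) (hy : y*y = 1) {m : ℕ}
    (hb : altProd x y m = altProd y x m) :
    altProd (mkK hR x) (mkK hR y) m = altProd (mkK hR y) (mkK hR x) m := by
  have hone : (x*y)^m = 1 := braid_pow_eq_one hx hy hb
  have hrho : ∀ j, j < m → rho y x j = rho x y (m - 1 - j) := by
    intro j hj
    have hm : 0 < m := by omega
    have hy' : y = (x*y)^(m-1) * x := by
      have hm1 : m = (m-1) + 1 := by omega
      have h0 : (x*y)^(m-1) * (x*y) = 1 := by rw [← pow_succ, ← hm1, hone]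
      have h1 : (x*y)^(m-1) = (x*y)⁻¹ := eq_inv_of_mul_eq_one_left h0
      rw [h1, mul_inv_invol hx hy, mul_assoc, hx, mul_one]
    rw [rho_invol y x hy hx, rho_invol x y hx hy, pow_swap hx hy]
    have hsum : (x*y)^j * ((x*y)^(m-1-j) * x) = y := by
      rw [← mul_assoc, ← pow_add, show j + (m-1-j) = m - 1 by omega, ← hy']
    rw [inv_mul_eq_iff_eq_mul]
    exact hsum.symm
  apply SemidirectProduct.ext
  · funext ρ
    rw [altK_left, altK_left, prod_ite_pow, prod_ite_pow]
    congr 1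
    calc ∑ j ∈ Finset.range m, (if (ρ:G) = rho x y j then 1 else 0)
        = ∑ j ∈ Finset.range m, (if (ρ:G) = rho x y (m-1-j) then 1 else 0) :=
          (Finset.sum_range_reflect (fun j => if (ρ:G) = rho x y j then 1 else 0) m).symm
      _ = ∑ j ∈ Finset.range m, (if (ρ:G) = rho y x j then 1 else 0) := by
          refine Finset.sum_congr rfl (fun j hj => ?_)
          rw [hrho j (Finset.mem_range.mp hj)]
  · rw [altK_right, altK_right, hb]

lemma altK_braid_comm (x y : G) (hc : x*y = y*x) :
    altProd (mkK hR x) (mkK hR y) 2 = altProd (mkK hR y) (mkK hR x) 2 := by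
  have hxyx : x * y * x⁻¹ = y := by rw [hc]; group
  have hyxy : y * x * y⁻¹ = x := by rw [← hc]; group
  apply SemidirectProduct.ext
  · funext ρ
    rw [altK_left, altK_left]
    have hr2 : List.range 2 = [0, 1] := rfl
    rw [hr2]
    simp only [List.map_cons, List.map_nil, List.prod_cons, List.prod_nil, mul_one]
    have e1 : rho x y 1 = y := hxyx
    have e2 : rho y x 1 = x := hyxy
    have e0 : rho x y 0 = x := rfl
    have e0' : rho y x 0 = y := rfl
    rw [e1, e2, e0, e0']
    rcases eq_or_ne ((ρ:G)) x with h1 | h1 <;> rcases eq_or_ne ((ρ:G)) y with h2 | h2 <;>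
      simp [h1, h2]
  · rw [altK_right, altK_right]
    show altProd x y 2 = altProd y x 2
    simp only [altProd, altList, List.prod_cons, List.prod_nil, mul_one]
    exact hc

lemma conj_conj_iff (g P X ρ : G) :
    (g*P) * X * (g*P)⁻¹ = ρ ↔ P * X * P⁻¹ = g⁻¹ * ρ * g := by
  constructor
  · intro h; rw [← h]; group
  · intro h
    have h2 : (g*P) * X * (g*P)⁻¹ = g * (P * X * P⁻¹) * g⁻¹ := by group
    rw [h2, h]; group

lemma prodK_left (p : ℕ) (x : Fin p → G) (a : Fin p → ℤ) (ρ : ↥R) :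
    ((List.ofFn (fun i => (mkK hR (x i)) ^ (a i))).prod).left ρ =
    (List.ofFn (fun i : Fin p =>
      if ((List.ofFn (fun j => x j ^ a j)).take i).prod * x i *
          (((List.ofFn (fun j => x j ^ a j)).take i).prod)⁻¹ = (ρ:G)
      then (ρ:G) ^ (a i) else 1)).prod := by
  induction p generalizing ρ with
  | zero => simp [SemidirectProduct.one_left]
  | succ p ih =>
      conv_lhs => rw [List.ofFn_succ, List.prod_cons]
      rw [SemidirectProduct.mul_left, mkK_zpow]
      simp only [Pi.mul_apply]
      conv_rhs => rw [List.ofFn_succ, List.prod_cons]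
      congr 1
      · show (if (ρ:G) = x 0 then (x 0)^(a 0) else 1) = _
        simp only [Fin.val_zero, List.take_zero, List.prod_nil, one_mul, inv_one, mul_one]
        rcases eq_or_ne (x 0) ((ρ:G)) with h | h
        · rw [if_pos h, if_pos h.symm, h]
        · rw [if_neg h, if_neg (Ne.symm h)]
      · show ((act hR) (x 0 ^ a 0)) _ ρ = _
        rw [act_apply, ih (fun i => x i.succ) (fun i => a i.succ) (conjEquiv hR (x 0 ^ a 0) ρ)]
        set g := x 0 ^ a 0 with hg
        have hconj : ∀ l : List G, g * l.prod * g⁻¹ = (l.map (fun z => g*z*g⁻¹)).prod := by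
          intro l
          have := map_list_prod (MulAut.conj g).toMonoidHom l
          exact this
        rw [hconj, List.map_ofFn]
        apply congrArg List.prod
        apply congrArg List.ofFn
        funext i
        simp only [Function.comp_apply]
        rw [conjEquiv_coe]
        have hW : (List.ofFn fun j : Fin (p+1) => x j ^ a j)
            = g :: List.ofFn (fun j : Fin p => x j.succ ^ a j.succ) := by
          rw [List.ofFn_succ]
        have htake : (List.ofFn fun j : Fin (p+1) => x j ^ a j).take (i.succ : ℕ)
            = g :: (List.ofFn (fun j : Fin p => x j.succ ^ a j.succ)).take (i : ℕ) := by
          rw [hW, Fin.val_succ, List.take_succ_cons]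
        rw [htake, List.prod_cons]
        set P := ((List.ofFn (fun j : Fin p => x j.succ ^ a j.succ)).take (i : ℕ)).prod with hP
        rcases Classical.em (P * x i.succ * P⁻¹ = g⁻¹ * (ρ:G) * g) with h | h
        · rw [if_pos h, if_pos ((conj_conj_iff g P (x i.succ) (ρ:G)).mpr h)]
          rw [show g⁻¹ * (ρ:G) * g = g⁻¹ * (ρ:G) * (g⁻¹)⁻¹ by rw [inv_inv], conj_zpow]
          group
        · rw [if_neg h, if_neg (fun hc => h ((conj_conj_iff g P (x i.succ) (ρ:G)).mp hc))]
          simp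

end Generic


lemma exists_sylWord {X : Set G} (hgen : Subgroup.closure X = ⊤) (g : G) :
    ∃ w : List G, SylWord X w ∧ w.prod = g := by
  have hg : g ∈ Subgroup.closure X := by rw [hgen]; trivial
  induction hg using Subgroup.closure_induction with
  | mem z hzX =>
      rcases eq_or_ne z 1 with h1 | h1
      · exact ⟨[], fun s hs => absurd hs List.not_mem_nil, by simp [h1]⟩
      · refine ⟨[z], ?_, by simp⟩
        intro s hs
        rw [List.mem_singleton] at hs
        subst hs
        exact ⟨s, hzX, 1, (zpow_one s).symm, h1⟩
  | one => exact ⟨[], fun s hs => absurd hs List.not_mem_nil, by simp⟩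
  | mul a b _ _ iha ihb =>
      obtain ⟨wa, hwa, hpa⟩ := iha
      obtain ⟨wb, hwb, hpb⟩ := ihb
      exact ⟨wa ++ wb, fun s hs => (List.mem_append.mp hs).elim (hwa s) (hwb s),
        by rw [List.prod_append, hpa, hpb]⟩
  | inv a _ iha =>
      obtain ⟨wa, hwa, hpa⟩ := iha
      refine ⟨(wa.map (fun z => z⁻¹)).reverse, ?_, by rw [← List.prod_inv_reverse, hpa]⟩
      intro s hs
      rw [List.mem_reverse, List.mem_map] at hs
      obtain ⟨z, hz, rfl⟩ := hs
      obtain ⟨x, hxX, c, hzc, hz1⟩ := hwa z hz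
      exact ⟨x, hxX, -c, by rw [hzc, zpow_neg], by simp [hzc] at hz1 ⊢; exact hz1⟩

lemma shorten_word {X : Set G} (w : List G) (hw : SylWord X w)
    (i j : ℕ) (hij : i < j) (hjlen : j < w.length)
    (xi xj : G) (hxi : xi ∈ X) (ai aj : ℤ)
    (hgi : w[i]'(lt_trans hij hjlen) = xi ^ ai) (hgj : w[j]'hjlen = xj ^ aj)
    (hcond : (w.take i).prod * xi * ((w.take i).prod)⁻¹
           = (w.take j).prod * xj * ((w.take j).prod)⁻¹) :
    ∃ w' : List G, SylWord X w' ∧ w'.prod = w.prod ∧ w'.length < w.length := by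
  have hilen : i < w.length := lt_trans hij hjlen
  set A := w.take i with hA
  set B := (w.drop (i+1)).take (j-(i+1)) with hB
  set C := w.drop (j+1) with hC
  set u := w[i]'hilen with hu'
  set t := w[j]'hjlen with ht'
  have hsplit : w = A ++ u :: (B ++ t :: C) := by
    conv_lhs => rw [← List.take_append_drop i w]
    congr 1
    rw [List.drop_eq_getElem_cons hilen]
    congr 1
    conv_lhs => rw [← List.take_append_drop (j-(i+1)) (w.drop (i+1))]
    congr 1
    rw [List.drop_drop, show (i+1) + (j - (i+1)) = j by omega,
      List.drop_eq_getElem_cons hjlen]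
  have htakej : w.take j = A ++ u :: B := by
    conv_lhs => rw [show j = i + (j - i) by omega, List.take_add]
    congr 1
    · rw [List.drop_eq_getElem_cons hilen, show j - i = (j - (i+1)) + 1 by omega,
        List.take_succ_cons]
  have hq : (w.take j).prod = A.prod * (u * B.prod) := by
    rw [htakej, List.prod_append, List.prod_cons]
  have hxj : xj = (u * B.prod)⁻¹ * xi * (u * B.prod) := by
    rw [hq] at hcond
    have h2 : A.prod * (u * B.prod) * xj * (A.prod * (u * B.prod))⁻¹
        = A.prod * ((u * B.prod) * xj * (u * B.prod)⁻¹) * A.prod⁻¹ := by group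
    rw [h2] at hcond
    have h3 : xi = u * B.prod * xj * (u * B.prod)⁻¹ :=
      mul_left_cancel (mul_right_cancel hcond)
    rw [h3]; group
  have hkey : u * (B.prod * t) = xi ^ (ai + aj) * B.prod := by
    rw [hgi] at hxj
    rw [hgi, hgj, hxj]
    rw [show ((xi^ai * B.prod)⁻¹ * xi * (xi^ai * B.prod) : G)
        = (xi^ai * B.prod)⁻¹ * xi * ((xi^ai * B.prod)⁻¹)⁻¹ by rw [inv_inv], conj_zpow]
    rw [zpow_add]
    group
  have hwprod : w.prod = A.prod * ((u * (B.prod * t)) * C.prod) := by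
    conv_lhs => rw [hsplit]
    rw [List.prod_append, List.prod_cons, List.prod_append, List.prod_cons]
    group
  have hlenw : w.length = A.length + (B.length + C.length) + 2 := by
    conv_lhs => rw [hsplit]
    simp [List.length_append]
    omega
  have hmemw : ∀ s, (s ∈ A ∨ s ∈ B ∨ s ∈ C) → s ∈ Syll X := by
    intro s hs
    rcases hs with h | h | h
    · exact hw s (List.mem_of_mem_take h)
    · exact hw s (List.mem_of_mem_drop (List.mem_of_mem_take h))
    · exact hw s (List.mem_of_mem_drop h)
  by_cases hz : xi ^ (ai + aj) = 1
  · refine ⟨A ++ (B ++ C), ?_, ?_, ?_⟩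
    · intro s hs
      apply hmemw
      rcases List.mem_append.mp hs with h | h
      · exact Or.inl h
      · rcases List.mem_append.mp h with h | h
        · exact Or.inr (Or.inl h)
        · exact Or.inr (Or.inr h)
    · rw [List.prod_append, List.prod_append, hwprod, hkey, hz, one_mul]
    · rw [hlenw]
      simp only [List.length_append, List.length_cons]
      omega
  · refine ⟨A ++ xi ^ (ai + aj) :: (B ++ C), ?_, ?_, ?_⟩
    · intro s hs
      rcases List.mem_append.mp hs with h | h
      · exact hmemw s (Or.inl h)
      · rcases List.mem_cons.mp h with h | h
        · subst h; exact ⟨xi, hxi, ai + aj, rfl, hz⟩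
        · rcases List.mem_append.mp h with h | h
          · exact hmemw s (Or.inr (Or.inl h))
          · exact hmemw s (Or.inr (Or.inr h))
    · rw [List.prod_append, List.prod_cons, List.prod_append, hwprod, hkey]
      group
    · rw [hlenw]
      simp only [List.length_append, List.length_cons]
      omega

lemma prod_ite_zpow (ρ : G) {p : ℕ} (c : Fin p → Prop) (a : Fin p → ℤ) :
    (List.ofFn (fun i => if c i then ρ ^ (a i) else 1)).prod
      = ρ ^ (∑ i, if c i then a i else 0) := by
  induction p with
  | zero => simp
  | succ p ih =>
      rw [List.ofFn_succ, List.prod_cons, Fin.sum_univ_succ, zpow_add,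
        ih (fun i => c i.succ) (fun i => a i.succ)]
      congr 1
      rcases Classical.em (c 0) with h | h <;> simp [h]

section Main

variable {V : Type*} (Δ : DyerData V)

lemma relator_one (r : FreeGroup V) (hr : r ∈ Δ.rels) :
    PresentedGroup.mk Δ.rels r = 1 := by
  exact (QuotientGroup.eq_one_iff r).mpr (Subgroup.subset_normalClosure hr)

lemma gen_sq (v : V) (hfv : Δ.f v = 2) :
    (PresentedGroup.of (rels := Δ.rels) v) * (PresentedGroup.of (rels := Δ.rels) v) = 1 := by
  have hne : Δ.f v ≠ ⊤ := by rw [hfv]; exact (by decide)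
  have h1 : PresentedGroup.mk Δ.rels ((FreeGroup.of v) ^ (Δ.f v).toNat) = 1 :=
    relator_one Δ _ (Or.inl ⟨v, hne, rfl⟩)
  rw [map_pow] at h1
  have h2 : (Δ.f v).toNat = 2 := by rw [hfv]; rfl
  rw [h2, pow_two] at h1
  exact h1

lemma braid_rel (u v : V) (hadj : Δ.adj u v) :
    altProd (PresentedGroup.of (rels := Δ.rels) u) (PresentedGroup.of (rels := Δ.rels) v)
        (Δ.m u v)
      = altProd (PresentedGroup.of (rels := Δ.rels) v) (PresentedGroup.of (rels := Δ.rels) u)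
        (Δ.m u v) := by
  have h1 := relator_one Δ _ (Or.inr ⟨u, v, hadj, rfl⟩)
  rw [map_mul, map_inv, mul_inv_eq_one] at h1
  rw [map_altProd, map_altProd] at h1
  exact h1

end Main

open Classical in
theorem statement_6 {V : Type*} (Δ : DyerData V)
    (X : Set (DyerGroup Δ)) (hX : X = DyerGens Δ)
    (R : Set (DyerGroup Δ)) (hR : R = {d | ∃ g : DyerGroup Δ, ∃ x ∈ X, d = g * x * g⁻¹}) :
    ∃ N : DyerGroup Δ → (R → DyerGroup Δ),
      -- values of the `ρ`-component lie in the cyclic group generated by `ρ`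
      (∀ (g : DyerGroup Δ) (ρ : R), N g ρ ∈ Subgroup.zpowers ρ.1) ∧
      -- finite support
      (∀ g, {ρ : R | N g ρ ≠ 1}.Finite) ∧
      -- N is computed by any syllabic expression: N(g) = Σ_i a_i [ρ_i]
      (∀ (p : ℕ) (x : Fin p → DyerGroup Δ), (∀ i, x i ∈ X) →
        ∀ (a : Fin p → ℤ), (∀ i, x i ^ a i ≠ 1) →
        ∀ ρ : R,
          N (List.ofFn fun i => x i ^ a i).prod ρ =
            (List.ofFn fun i : Fin p =>
              if ((List.ofFn fun j => x j ^ a j).take i).prod * x i *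
                  (((List.ofFn fun j => x j ^ a j).take i).prod)⁻¹ = (ρ : DyerGroup Δ)
              then (ρ : DyerGroup Δ) ^ a i else 1).prod) ∧
      -- cocycle condition N(gh) = N(g) + g ⋅ N(h)
      (∀ g h : DyerGroup Δ, ∀ ρ ρ' : R, (ρ' : DyerGroup Δ) = g⁻¹ * ρ * g →
        N (g * h) ρ = N g ρ * (g * N h ρ' * g⁻¹)) ∧
      -- syllabic length equals the number of nonzero components
      (∀ g, sylLen X g = {ρ : R | N g ρ ≠ 1}.ncard) := by
  subst hX
  subst hR
  have hRc : ∀ (g ρ : DyerGroup Δ),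
      ρ ∈ {d | ∃ g : DyerGroup Δ, ∃ x ∈ DyerGens Δ, d = g * x * g⁻¹} →
      g * ρ * g⁻¹ ∈ {d | ∃ g : DyerGroup Δ, ∃ x ∈ DyerGens Δ, d = g * x * g⁻¹} := by
    rintro g ρ ⟨g', x, hx, rfl⟩
    exact ⟨g * g', x, hx, by group⟩
  -- the relators die in K
  have hRels : ∀ r ∈ Δ.rels,
      FreeGroup.lift (fun v => mkK hRc (PresentedGroup.of (rels := Δ.rels) v)) r = 1 := by
    intro r hr
    rcases hr with ⟨v, hfv, rfl⟩ | ⟨u, v, hadj, rfl⟩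
    · rw [map_pow, FreeGroup.lift_apply_of]
      have hx1 : (PresentedGroup.of (rels := Δ.rels) v) ^ (Δ.f v).toNat = 1 := by
        have h1 := relator_one Δ _ (Or.inl ⟨v, hfv, rfl⟩)
        rwa [map_pow] at h1
      rw [← zpow_natCast, mkK_zpow]
      apply SemidirectProduct.ext
      · funext ρ
        simp only [pel, SemidirectProduct.one_left, Pi.one_apply, zpow_natCast, hx1]
        split <;> rfl
      · simp only [pel, SemidirectProduct.one_right, zpow_natCast, hx1]
    · rw [map_mul, map_inv, mul_inv_eq_one, map_altProd, map_altProd,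
        FreeGroup.lift_apply_of, FreeGroup.lift_apply_of]
      rcases eq_or_ne (Δ.m u v) 2 with hm | hm
      · rw [hm]
        apply altK_braid_comm
        have hb := braid_rel Δ u v hadj
        rw [hm] at hb
        simpa [altProd, altList] using hb
      · obtain ⟨hfu, hfv⟩ := Δ.dyer u v hadj hm
        exact altK_braid_invol hRc _ _ (gen_sq Δ u hfu) (gen_sq Δ v hfv)
          (braid_rel Δ u v hadj)
  set Φ : DyerGroup Δ →* K hRc := PresentedGroup.toGroup hRels with hΦdef
  have hΦof : ∀ v : V, Φ (PresentedGroup.of v)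
      = mkK hRc (PresentedGroup.of (rels := Δ.rels) v) := by
    intro v
    exact PresentedGroup.toGroup.of hRels
  have hΦr : ∀ g, (Φ g).right = g := by
    intro g
    have hhom : (SemidirectProduct.rightHom.comp Φ) = MonoidHom.id (DyerGroup Δ) := by
      apply PresentedGroup.ext
      intro v
      show SemidirectProduct.rightHom (Φ (PresentedGroup.of v)) = PresentedGroup.of v
      rw [hΦof]
      rfl
    exact DFunLike.congr_fun hhom g
  -- the multiplicative formula
  have hmulL : ∀ a b : DyerGroup Δ, ∀ ρ, (Φ (a*b)).left ρ
      = (Φ a).left ρ * (a * (Φ b).left (conjEquiv hRc a ρ) * a⁻¹) := by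
    intro a b ρ
    rw [map_mul, SemidirectProduct.mul_left]
    simp only [Pi.mul_apply, act_apply]
    rw [hΦr a]
  -- property 3 : the explicit formula
  have hN3 : ∀ (p : ℕ) (x : Fin p → DyerGroup Δ), (∀ i, x i ∈ DyerGens Δ) →
      ∀ (a : Fin p → ℤ),
        ∀ ρ : ↥{d | ∃ g : DyerGroup Δ, ∃ x ∈ DyerGens Δ, d = g * x * g⁻¹},
          (Φ ((List.ofFn fun i => x i ^ a i).prod)).left ρ =
            (List.ofFn fun i : Fin p =>
              if ((List.ofFn fun j => x j ^ a j).take i).prod * x i *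
                  (((List.ofFn fun j => x j ^ a j).take i).prod)⁻¹ = (ρ : DyerGroup Δ)
              then (ρ : DyerGroup Δ) ^ a i else 1).prod := by
    intro p x hx a ρ
    have hΦxi : ∀ i, Φ (x i ^ a i) = (mkK hRc (x i)) ^ (a i) := by
      intro i
      obtain ⟨v, hv⟩ := hx i
      rw [map_zpow, ← hv, hΦof]
    rw [map_list_prod, List.map_ofFn]
    have hl : (List.ofFn (Φ ∘ fun i => x i ^ a i))
        = List.ofFn (fun i => (mkK hRc (x i)) ^ (a i)) := by
      apply congrArg
      funext i
      exact hΦxi i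
    rw [hl, prodK_left]
  -- properties 1 and 2 by induction
  have hQ : ∀ g : DyerGroup Δ,
      (∀ ρ : ↥{d | ∃ g : DyerGroup Δ, ∃ x ∈ DyerGens Δ, d = g * x * g⁻¹},
        (Φ g).left ρ ∈ Subgroup.zpowers ρ.1) ∧
      {ρ : ↥{d | ∃ g : DyerGroup Δ, ∃ x ∈ DyerGens Δ, d = g * x * g⁻¹} |
        (Φ g).left ρ ≠ 1}.Finite := by
    intro g
    have hg : g ∈ Subgroup.closure (DyerGens Δ) := by
      have hD : DyerGens Δ = Set.range (PresentedGroup.of (rels := Δ.rels)) := rfl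
      rw [hD, PresentedGroup.closure_range_of]
      trivial
    induction hg using Subgroup.closure_induction with
    | mem z hz =>
        obtain ⟨v, rfl⟩ := hz
        rw [hΦof v]
        constructor
        · intro ρ
          rw [mkK_left]
          rcases eq_or_ne ((ρ : DyerGroup Δ)) (PresentedGroup.of v) with h | h
          · rw [if_pos h, ← h]
            exact Subgroup.mem_zpowers _
          · rw [if_neg h]
            exact one_mem _
        · apply Set.Finite.subset (Set.Finite.preimage
            (Set.injOn_of_injective Subtype.val_injective)
            (Set.finite_singleton (PresentedGroup.of (rels := Δ.rels) v)))
          intro ρ hρ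
          have hρ' : (if ρ.1 = PresentedGroup.of (rels := Δ.rels) v
              then PresentedGroup.of (rels := Δ.rels) v else 1) ≠ 1 := hρ
          rcases eq_or_ne (ρ.1) (PresentedGroup.of (rels := Δ.rels) v) with h | h
          · exact Set.mem_preimage.mpr h
          · rw [if_neg h] at hρ'
            exact absurd rfl hρ'
    | one =>
        constructor
        · intro ρ
          rw [map_one]
          exact one_mem _
        · apply Set.Finite.subset (Set.finite_empty)
          intro ρ hρ
          simp only [Set.mem_setOf_eq, map_one] at hρ
          exact absurd rfl hρ
    | mul a b _ _ iha ihb =>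
        constructor
        · intro ρ
          rw [hmulL a b ρ]
          apply mul_mem (iha.1 ρ)
          obtain ⟨k, hk⟩ := Subgroup.mem_zpowers_iff.mp (ihb.1 (conjEquiv hRc a ρ))
          rw [Subgroup.mem_zpowers_iff]
          refine ⟨k, ?_⟩
          rw [← hk, conjEquiv_coe]
          exact (conj_zpow_inner a _ k).symm
        · apply Set.Finite.subset (Set.Finite.union iha.2
            (Set.Finite.preimage (Set.injOn_of_injective (conjEquiv hRc a).injective) ihb.2))
          intro ρ hρ
          by_contra hc
          rw [Set.mem_union] at hc
          push_neg at hc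
          simp only [Set.mem_setOf_eq, not_not, Set.mem_preimage] at hc
          apply hρ
          rw [hmulL a b ρ, hc.1, hc.2]
          simp
    | inv a _ iha =>
        have hback : ∀ σ, conjEquiv hRc a (conjEquiv hRc a⁻¹ σ) = σ := by
          intro σ
          apply Subtype.ext
          simp only [conjEquiv_coe]
          group
        have hinvL : ∀ σ, (Φ a⁻¹).left σ
            = a⁻¹ * ((Φ a).left (conjEquiv hRc a⁻¹ σ))⁻¹ * a := by
          intro σ
          have h1 := hmulL a a⁻¹ (conjEquiv hRc a⁻¹ σ)
          rw [mul_inv_cancel, map_one, hback σ] at h1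
          have h0 : (1 : (↥{d | ∃ g : DyerGroup Δ, ∃ x ∈ DyerGens Δ, d = g * x * g⁻¹} → DyerGroup Δ)) (conjEquiv hRc a⁻¹ σ) = 1 := rfl
          rw [SemidirectProduct.one_left, h0] at h1
          have h2 : a * (Φ a⁻¹).left σ * a⁻¹
              = ((Φ a).left (conjEquiv hRc a⁻¹ σ))⁻¹ :=
            eq_inv_of_mul_eq_one_right h1.symm
          rw [← h2]
          group
        constructor
        · intro σ
          rw [hinvL σ]
          obtain ⟨k, hk⟩ := Subgroup.mem_zpowers_iff.mp (iha.1 (conjEquiv hRc a⁻¹ σ))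
          rw [Subgroup.mem_zpowers_iff]
          refine ⟨-k, ?_⟩
          rw [← hk, conjEquiv_coe, inv_inv]
          exact (conj_zpow_inv a _ k).symm
        · apply Set.Finite.subset
            (Set.Finite.preimage (Set.injOn_of_injective (conjEquiv hRc a⁻¹).injective) iha.2)
          intro σ hσ
          rw [Set.mem_preimage]
          simp only [Set.mem_setOf_eq] at hσ ⊢
          intro hc
          apply hσ
          rw [hinvL σ, hc]
          simp
  -- existence of syllabic words
  have hgen : Subgroup.closure (DyerGens Δ) = ⊤ := by
    have hD : DyerGens Δ = Set.range (PresentedGroup.of (rels := Δ.rels)) := rfl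
    rw [hD, PresentedGroup.closure_range_of]
  refine ⟨fun g => (Φ g).left, fun g ρ => (hQ g).1 ρ, fun g => (hQ g).2, ?_, ?_, ?_⟩
  · intro p x hx a _ ρ
    exact hN3 p x hx a ρ
  · intro g h ρ ρ' hρ'
    show (Φ (g * h)).left ρ = (Φ g).left ρ * (g * (Φ h).left ρ' * g⁻¹)
    rw [hmulL g h ρ]
    have hce : conjEquiv hRc g ρ = ρ' := Subtype.ext (by rw [conjEquiv_coe, ← hρ'])
    rw [hce]
  · intro g
    show sylLen (DyerGens Δ) g = {ρ : ↥{d | ∃ g : DyerGroup Δ, ∃ x ∈ DyerGens Δ,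
      d = g * x * g⁻¹} | (Φ g).left ρ ≠ 1}.ncard
    have hne : {n | ∃ w : List (DyerGroup Δ), SylWord (DyerGens Δ) w ∧ w.prod = g
        ∧ w.length = n}.Nonempty := by
      obtain ⟨w, hw, hp⟩ := exists_sylWord hgen g
      exact ⟨w.length, w, hw, hp, rfl⟩
    obtain ⟨w, hw, hprod, hlenw⟩ := Nat.sInf_mem hne
    have hlenw' : w.length = sylLen (DyerGens Δ) g := hlenw
    have hch : ∀ i : Fin w.length, ∃ x, x ∈ DyerGens Δ
        ∧ ∃ a : ℤ, w.get i = x ^ a ∧ w.get i ≠ 1 := by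
      intro i
      obtain ⟨x, hx, a, h1, h2⟩ := hw (w.get i) (List.get_mem w i)
      exact ⟨x, hx, a, h1, h2⟩
    choose xf hxX af heq hnef using hch
    have hwof : w = List.ofFn (fun i => xf i ^ af i) :=
      Eq.trans (List.ofFn_get w).symm (congrArg List.ofFn (funext fun i => heq i))
    set ρf : Fin w.length → DyerGroup Δ :=
      fun i => (w.take i).prod * xf i * ((w.take i).prod)⁻¹ with hρf
    have ρfmem : ∀ i, ρf i ∈ {d | ∃ g : DyerGroup Δ, ∃ x ∈ DyerGens Δ, d = g * x * g⁻¹} :=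
      fun i => ⟨(w.take i).prod, xf i, hxX i, rfl⟩
    have haf : ∀ i, xf i ^ af i ≠ 1 := by
      intro i
      rw [← heq i]
      exact hnef i
    have hNg : ∀ ρ : ↥{d | ∃ g : DyerGroup Δ, ∃ x ∈ DyerGens Δ, d = g * x * g⁻¹},
        (Φ g).left ρ = (ρ : DyerGroup Δ) ^ (∑ i, if ρf i = (ρ : DyerGroup Δ) then af i else 0) := by
      intro ρ
      have h1 := hN3 w.length xf hxX af ρ
      rw [← hwof, hprod] at h1
      rw [h1]
      exact prod_ite_zpow (ρ : DyerGroup Δ) (fun i => ρf i = (ρ : DyerGroup Δ)) af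
    -- injectivity of the reflection sequence
    have hinj : Function.Injective ρf := by
      have key : ∀ i j : Fin w.length, (i : ℕ) < (j : ℕ) → ρf i = ρf j → False := by
        intro i j hlt heqr
        simp only [hρf] at heqr
        obtain ⟨w', hw', hprod', hlen'⟩ := shorten_word w hw i j hlt j.isLt
          (xf i) (xf j) (hxX i) (af i) (af j)
          (by rw [← List.get_eq_getElem]; exact heq i)
          (by rw [← List.get_eq_getElem]; exact heq j)
          heqr
        have hle : sylLen (DyerGens Δ) g ≤ w'.length :=
          Nat.sInf_le (⟨w', hw', by rw [hprod', hprod], rfl⟩ :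
            w'.length ∈ {n | ∃ w : List (DyerGroup Δ), SylWord (DyerGens Δ) w
              ∧ w.prod = g ∧ w.length = n})
        rw [← hlenw'] at hle
        omega
      intro i j hij
      rcases lt_trichotomy ((i : ℕ)) ((j : ℕ)) with h | h | h
      · exact absurd hij (fun hc => key i j h hc)
      · exact Fin.ext h
      · exact absurd hij.symm (fun hc => key j i h hc)
    have hsupp : {ρ : ↥{d | ∃ g : DyerGroup Δ, ∃ x ∈ DyerGens Δ, d = g * x * g⁻¹} |
        (Φ g).left ρ ≠ 1}
        = Subtype.val ⁻¹' (Set.range ρf) := by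
      ext ρ
      simp only [Set.mem_setOf_eq, Set.mem_preimage]
      constructor
      · intro hne3
        by_contra hnr
        apply hne3
        rw [hNg ρ]
        have hnone : ∀ i, ¬ (ρf i = (ρ : DyerGroup Δ)) := fun i hc => hnr ⟨i, hc⟩
        rw [Finset.sum_eq_zero (fun i _ => if_neg (hnone i))]
        exact zpow_zero _
      · rintro ⟨i, hi⟩
        rw [hNg ρ]
        have hsum : (∑ i', if ρf i' = (ρ : DyerGroup Δ) then af i' else 0) = af i := by
          rw [Finset.sum_eq_single_of_mem i (Finset.mem_univ i)
            (fun b _ hb => if_neg (fun hc => hb (hinj (hc.trans hi.symm))))]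
          rw [if_pos hi]
        rw [hsum, ← hi]
        show ((w.take i).prod * xf i * ((w.take i).prod)⁻¹) ^ af i ≠ 1
        rw [conj_zpow]
        intro hc
        apply haf i
        have h4 : xf i ^ af i
            = ((w.take i).prod)⁻¹ * ((w.take i).prod * xf i ^ af i * ((w.take i).prod)⁻¹)
              * (w.take i).prod := by group
        rw [h4, hc]
        group
    rw [hsupp]
    have hcardeq : (Subtype.val ⁻¹'
        (Set.range ρf) : Set (↥{d | ∃ g : DyerGroup Δ, ∃ x ∈ DyerGens Δ, d = g * x * g⁻¹})).ncard = w.length := by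
      have e : Fin w.length ≃ (Subtype.val ⁻¹'
          (Set.range ρf) : Set (↥{d | ∃ g : DyerGroup Δ, ∃ x ∈ DyerGens Δ, d = g * x * g⁻¹})) := by
        refine Equiv.ofBijective (fun i => ⟨⟨ρf i, ρfmem i⟩, ⟨i, rfl⟩⟩) ⟨?_, ?_⟩
        · intro i1 i2 h12
          apply hinj
          exact congrArg (fun z => ((z : ↥{d | ∃ g : DyerGroup Δ, ∃ x ∈ DyerGens Δ,
            d = g * x * g⁻¹}) : DyerGroup Δ)) (congrArg Subtype.val h12)
        · rintro ⟨ρ, ⟨i, hi⟩⟩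
          exact ⟨i, Subtype.ext (Subtype.ext hi)⟩
      rw [← Nat.card_coe_set_eq, ← Nat.card_congr e, Nat.card_eq_fintype_card,
        Fintype.card_fin]
    rw [hcardeq, ← hlenw']


end Paper
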